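/- Every non-identity morphism in the category Nec of necklaces (objects: necklaces in preferred form; morphisms: simplicial maps preserving first and last vertices) is a composition of morphisms of the following three types: (i) injective morphisms f: T → T' with |V_{T'} - J_{T'}| - |V_T - J_T| = 1; (ii) morphisms f_1 ∨ ... ∨ f_k where exactly one f_p is a simplicial codegeneracy and the rest are identities; (iii) morphisms collapsing a single Δ^1 bead to a point and injective on the other beads. -/

import Mathlib

/-! Combinatorial model of necklaces (wedges of simplices glued end to end),
encoded by the totally ordered vertex set `Fin (m+1)` together with the
subset `J` of joints (containing the first and last vertex); beads are the
intervals between consecutive joints. -/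

structure Necklace where
  m : ℕ
  J : Finset (Fin (m + 1))
  zero_mem : 0 ∈ J
  last_mem : Fin.last m ∈ J

namespace Necklace

/-- Two vertices lie in a common bead. -/
def SameBead (T : Necklace) (v w : Fin (T.m + 1)) : Prop :=
  ∃ a b : Fin (T.m + 1), a ∈ T.J ∧ b ∈ T.J ∧ (∀ c ∈ T.J, c ≤ a ∨ b ≤ c) ∧
    a ≤ v ∧ v ≤ b ∧ a ≤ w ∧ w ≤ b

/-- A morphism of necklaces: a vertex-level monotone map preserving the first
and last vertices and mapping each bead into a single bead.  (Such data is
equivalent to a simplicial map of necklaces preserving endpoints.) -/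
structure Hom (T T' : Necklace) where
  f : Fin (T.m + 1) → Fin (T'.m + 1)
  mono : Monotone f
  map_zero : f 0 = 0
  map_last : f (Fin.last T.m) = Fin.last T'.m
  bead : ∀ v w, SameBead T v w → SameBead T' (f v) (f w)

/-- Identity morphism. -/
def Hom.id (T : Necklace) : Hom T T :=
  ⟨_root_.id, monotone_id, rfl, rfl, fun _ _ h => h⟩

/-- Composition of morphisms of necklaces. -/
def Hom.comp {T T' T'' : Necklace} (g : Hom T' T'') (h : Hom T T') : Hom T T'' :=
  ⟨g.f ∘ h.f, g.mono.comp h.mono,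
    by simp [Function.comp, h.map_zero, g.map_zero],
    by simp [Function.comp, h.map_last, g.map_last],
    fun v w hb => g.bead _ _ (h.bead v w hb)⟩

/-- The set of non-joint vertices. -/
def nonJoints (T : Necklace) : Finset (Fin (T.m + 1)) := Finset.univ \ T.J

/-- The number of non-joint vertices, `N = |V_T - J_T|`. -/
def N (T : Necklace) : ℕ := T.nonJoints.card

/-- Enumeration of the non-joint vertices in increasing order. -/
noncomputable def enum (T : Necklace) : Fin T.N ≃o {x // x ∈ T.nonJoints} :=
  T.nonJoints.orderIsoOfFin rfl

/-- The subset of vertices encoded by a cube-vertex `s : Fin (N T) → Bool`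
(the joints together with the non-joints whose coordinate is `true`). -/
noncomputable def subsetOf (T : Necklace) (s : Fin T.N → Bool) : Finset (Fin (T.m + 1)) :=
  T.J ∪ (Finset.univ.filter (fun i => s i = true)).image (fun i => (T.enum i : Fin (T.m + 1)))

/-- The functor `P₁(g) : {0,1}^{N T} → {0,1}^{N T'}` induced by a morphism of
necklaces, expressed on vertices of the cubes via indicator sequences. -/
noncomputable def P1 {T T' : Necklace} (g : Hom T T') (s : Fin T.N → Bool) :
    Fin T'.N → Bool :=
  fun i' => decide ((T'.enum i' : Fin (T'.m + 1)) ∈ (T.subsetOf s).image g.f)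

/-- Type (i) morphisms: injective with `|V' - J'| = |V - J| + 1`. -/
def TypeI {T T' : Necklace} (g : Hom T T') : Prop :=
  Function.Injective g.f ∧ T'.N = T.N + 1

/-- Type (ii) morphisms: a wedge of identities and exactly one simplicial
codegeneracy; vertex-theoretically, a surjection collapsing exactly one pair of
consecutive vertices, not both of which are joints, mapping joints bijectively
onto joints. -/
def TypeII {T T' : Necklace} (g : Hom T T') : Prop :=
  Function.Surjective g.f ∧ Finset.image g.f T.J = T'.J ∧ Set.InjOn g.f (T.J : Set _) ∧
  ∃ v : Fin T.m, g.f v.castSucc = g.f v.succ ∧ ¬(v.castSucc ∈ T.J ∧ v.succ ∈ T.J) ∧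
    ∀ a b, g.f a = g.f b → a = b ∨ ({a, b} : Finset _) = {v.castSucc, v.succ}

/-- Type (iii) morphisms: collapse of a `Δ¹` bead (both of whose endpoints are
joints) to a point, injective elsewhere. -/
def TypeIII {T T' : Necklace} (g : Hom T T') : Prop :=
  Function.Surjective g.f ∧ Finset.image g.f T.J = T'.J ∧
  ∃ v : Fin T.m, g.f v.castSucc = g.f v.succ ∧ v.castSucc ∈ T.J ∧ v.succ ∈ T.J ∧
    ∀ a b, g.f a = g.f b → a = b ∨ ({a, b} : Finset _) = {v.castSucc, v.succ}

/-- `g` is an identity morphism of necklaces. -/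
def IsIdentity {T T' : Necklace} (g : Hom T T') : Prop :=
  T = T' ∧ ∀ v, ((g.f v : ℕ) = (v : ℕ))

/-- Compositions of morphisms of types (i), (ii), (iii). -/
inductive IsGenComp : ∀ {T T' : Necklace}, Hom T T' → Prop
  | of {T T'} (g : Hom T T') : TypeI g ∨ TypeII g ∨ TypeIII g → IsGenComp g
  | comp {T T' T''} (g : Hom T T') (g' : Hom T' T'') :
      IsGenComp g → IsGenComp g' → IsGenComp (g'.comp g)

/-- Compositions of `n` morphisms of type (i). -/
inductive IsCompI : ∀ {T T' : Necklace}, Hom T T' → ℕ → Prop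
  | of {T T'} (g : Hom T T') : TypeI g → IsCompI g 1
  | comp {T T' T''} (g : Hom T T') (g' : Hom T' T'') {n n' : ℕ} :
      IsCompI g n → IsCompI g' n' → IsCompI (g'.comp g) (n + n')

/-- The standard simplex `Δᵖ` regarded as a necklace with one bead. -/
def simplex (p : ℕ) : Necklace :=
  ⟨p, {0, Fin.last p}, by simp, by simp⟩

end Necklace
namespace Necklace

theorem Hom.ext' {T T' : Necklace} {g h : Hom T T'} (H : g.f = h.f) : g = h := by
  cases g; cases h; cases H; rfl

theorem sameBead_of_between (T : Necklace) (v w : Fin (T.m + 1))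
    (h : ∀ c ∈ T.J, (c ≤ v ∧ c ≤ w) ∨ (v ≤ c ∧ w ≤ c)) : T.SameBead v w := by
  classical
  have h0 : (0 : Fin (T.m + 1)) ∈ T.J.filter (fun c => c ≤ v ∧ c ≤ w) := by
    simp [T.zero_mem, Fin.zero_le]
  have hl : Fin.last T.m ∈ T.J.filter (fun c => v ≤ c ∧ w ≤ c) := by
    simp [T.last_mem, Fin.le_last]
  have hlomem := Finset.max'_mem (T.J.filter (fun c => c ≤ v ∧ c ≤ w)) ⟨0, h0⟩
  have lh := Finset.mem_filter.1 hlomem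
  have hhimem := Finset.min'_mem (T.J.filter (fun c => v ≤ c ∧ w ≤ c)) ⟨_, hl⟩
  have hh := Finset.mem_filter.1 hhimem
  refine ⟨_, _, lh.1, hh.1, ?_, lh.2.1, hh.2.1, lh.2.2, hh.2.2⟩
  intro c hc
  rcases h c hc with h1 | h1
  · exact Or.inl (Finset.le_max' _ _ (Finset.mem_filter.2 ⟨hc, h1⟩))
  · exact Or.inr (Finset.min'_le _ _ (Finset.mem_filter.2 ⟨hc, h1⟩))

theorem joint_mem_range {T T' : Necklace} (g : Hom T T') {u : Fin (T'.m + 1)}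
    (hu : u ∈ T'.J) (hnr : ∀ x, g.f x ≠ u) : False := by
  classical
  have h0 : u ≠ 0 := fun h => hnr 0 (by rw [g.map_zero, h])
  have hlast : u ≠ Fin.last T'.m := fun h => hnr _ (by rw [g.map_last, h])
  set S := Finset.univ.filter (fun x : Fin (T.m + 1) => g.f x < u) with hS
  have h0S : (0 : Fin (T.m + 1)) ∈ S := by
    simp only [hS, Finset.mem_filter, Finset.mem_univ, true_and, g.map_zero]
    exact lt_of_le_of_ne (Fin.zero_le u) (Ne.symm h0)
  have hvS := Finset.mem_filter.1 (S.max'_mem ⟨0, h0S⟩)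
  set v := S.max' ⟨0, h0S⟩ with hv
  have hfv : g.f v < u := hvS.2
  have hvne : v ≠ Fin.last T.m := by
    intro h
    rw [h, g.map_last] at hfv
    exact absurd (Fin.le_last u) (not_le.2 hfv)
  have hvlt : v.val < T.m := by
    have h1 : v.val ≤ T.m := Nat.le_of_lt_succ v.isLt
    rcases lt_or_eq_of_le h1 with h2 | h2
    · exact h2
    · exact absurd (Fin.ext h2 : v = Fin.last T.m) hvne
  set v1 : Fin (T.m + 1) := ⟨v.val + 1, by omega⟩ with hv1
  have hv1n : v1 ∉ S := by
    intro h
    have h2 := Finset.le_max' S v1 h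
    rw [← hv] at h2
    simp only [Fin.le_def, hv1] at h2
    omega
  have hfv1 : u < g.f v1 := by
    have h3 : ¬ g.f v1 < u := fun h =>
      hv1n (by simp only [hS, Finset.mem_filter, Finset.mem_univ, true_and]; exact h)
    exact lt_of_le_of_ne (le_of_not_gt h3) (fun h => hnr v1 h.symm)
  have hsb : T.SameBead v v1 := by
    apply sameBead_of_between
    intro c hc
    rcases le_or_gt c v with h | h
    · exact Or.inl ⟨h, le_trans h (by simp [Fin.le_def, hv1])⟩
    · refine Or.inr ⟨le_of_lt h, ?_⟩
      simp only [Fin.le_def, hv1]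
      exact h
  obtain ⟨a, b, haJ, hbJ, hcons, h1, h2, h3, h4⟩ := g.bead _ _ hsb
  rcases hcons u hu with h | h
  · exact absurd (le_trans h h1) (not_le.2 hfv)
  · exact absurd (le_trans h4 h) (not_le.2 hfv1)

theorem exists_adjacent_collision {T T' : Necklace} (g : Hom T T')
    (h : ¬ Function.Injective g.f) :
    ∃ k, ∃ hk : k + 1 < T.m + 1, g.f ⟨k, by omega⟩ = g.f ⟨k + 1, hk⟩ := by
  have key : ∀ x y : Fin (T.m + 1), x < y → g.f x = g.f y →
      ∃ k, ∃ hk : k + 1 < T.m + 1, g.f ⟨k, by omega⟩ = g.f ⟨k + 1, hk⟩ := by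
    intro x y hxy hf
    have h1 : x.val + 1 < T.m + 1 := by
      have := y.isLt
      have : x.val < y.val := hxy
      omega
    refine ⟨x.val, h1, ?_⟩
    have h2 : g.f ⟨x.val, by omega⟩ = g.f x := by congr 1
    have h3 : g.f ⟨x.val + 1, h1⟩ ≤ g.f y := g.mono (by simp [Fin.le_def]; exact hxy)
    have h4 : g.f x ≤ g.f ⟨x.val + 1, h1⟩ := g.mono (by simp [Fin.le_def])
    rw [h2, ← hf] at *
    exact le_antisymm h4 h3
  unfold Function.Injective at h
  push_neg at h
  obtain ⟨x, y, hf, hne⟩ := h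
  rcases lt_trichotomy x y with hlt | heq | hlt
  · exact key x y hlt hf
  · exact absurd heq hne
  · exact key y x hlt hf.symm

theorem mono_bij_val {a b : ℕ} (f : Fin (a+1) → Fin (b+1)) (hm : Monotone f)
    (hinj : Function.Injective f) (hsurj : Function.Surjective f) :
    ∀ x, (f x).val = x.val := by
  have hcard : a + 1 = b + 1 := by
    simpa using Fintype.card_of_bijective ⟨hinj, hsurj⟩
  have ha : a = b := by omega
  subst ha
  have hsm : StrictMono f := hm.strictMono_of_injective hinj
  have h2 : StrictMono.orderIsoOfSurjective f hsm hsurj = OrderIso.refl _ :=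
    Subsingleton.elim _ _
  intro x
  have h3 : StrictMono.orderIsoOfSurjective f hsm hsurj x = x := by rw [h2]; rfl
  have h4 : StrictMono.orderIsoOfSurjective f hsm hsurj x = f x :=
    congrFun (StrictMono.coe_orderIsoOfSurjective f hsm hsurj) x
  rw [h4] at h3
  exact congrArg Fin.val h3

theorem ext' {T T' : Necklace} (hm : T.m = T'.m)
    (hJ : T.J.image Fin.val = T'.J.image Fin.val) : T = T' := by
  obtain ⟨m, J, h0, hl⟩ := T
  obtain ⟨m', J', h0', hl'⟩ := T'
  dsimp at hm
  subst hm
  dsimp at hJ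
  have : J = J' := by
    ext x
    constructor <;> intro hx
    · have : x.val ∈ J'.image Fin.val := hJ ▸ Finset.mem_image_of_mem _ hx
      obtain ⟨y, hy, hyv⟩ := Finset.mem_image.1 this
      exact (Fin.ext hyv : y = x) ▸ hy
    · have : x.val ∈ J.image Fin.val := hJ ▸ Finset.mem_image_of_mem _ hx
      obtain ⟨y, hy, hyv⟩ := Finset.mem_image.1 this
      exact (Fin.ext hyv : y = x) ▸ hy
  subst this
  rfl

theorem isGenComp_identity_comp {T T' T'' : Necklace} (g : Hom T T') (h : Hom T' T'')
    (hh : IsIdentity h) (hg : IsGenComp g) : IsGenComp (h.comp g) := by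
  obtain ⟨heq, hv⟩ := hh
  subst heq
  have : h.comp g = g := Hom.ext' (funext fun x => Fin.ext (hv (g.f x)))
  rw [this]; exact hg

theorem isGenComp_comp_identity {T T' T'' : Necklace} (h : Hom T T') (g : Hom T' T'')
    (hh : IsIdentity h) (hg : IsGenComp g) : IsGenComp (g.comp h) := by
  obtain ⟨heq, hv⟩ := hh
  subst heq
  have : g.comp h = g := Hom.ext' (funext fun x => by
    show g.f (h.f x) = g.f x
    congr 1
    exact Fin.ext (hv x))
  rw [this]; exact hg

end Necklace
namespace Necklace

set_option maxHeartbeats 400000 in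
theorem main : ∀ (μ : ℕ) {T T' : Necklace} (g : Hom T T'),
    (T.m + T'.m) * (T.m + T'.m + 2) + ((T.J.image Fin.val) \ (T'.J.image Fin.val)).card < μ →
    IsIdentity g ∨ IsGenComp g := by
  intro μ
  induction μ with
  | zero => intro T T' g h; omega
  | succ μ ih =>
    intro T T' g hμ
    by_cases hsurj : Function.Surjective g.f
    · by_cases hinj : Function.Injective g.f
      · -- case 3: bijective
        have hvals : ∀ x, (g.f x).val = x.val := mono_bij_val g.f g.mono hinj hsurj
        have hmeq : T.m = T'.m := by
          have hcard : T.m + 1 = T'.m + 1 := by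
            simpa using Fintype.card_of_bijective (⟨hinj, hsurj⟩ : Function.Bijective g.f)
          omega
        have hJ'sub : ∀ c' : Fin (T'.m+1), c' ∈ T'.J → c'.val ∈ T.J.image Fin.val := by
          intro c' hc'
          by_contra hnot
          have hknJ : ∀ j : Fin (T.m+1), j ∈ T.J → j.val ≠ c'.val := by
            intro j hj h
            exact hnot (Finset.mem_image.2 ⟨j, hj, h⟩)
          have h0 : c'.val ≠ 0 := by
            intro h
            exact hknJ 0 T.zero_mem (by simp only [Fin.val_zero]; omega)
          have hlastv : c'.val ≠ T'.m := by
            intro h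
            exact hknJ (Fin.last T.m) T.last_mem (by simp only [Fin.val_last]; omega)
          have hc'lt := c'.isLt
          set x : Fin (T.m+1) := ⟨c'.val - 1, by omega⟩ with hx
          set y : Fin (T.m+1) := ⟨c'.val + 1, by omega⟩ with hy
          have hxv : x.val = c'.val - 1 := rfl
          have hyv : y.val = c'.val + 1 := rfl
          have hsb : T.SameBead x y := by
            apply sameBead_of_between
            intro j hj
            have hne := hknJ j hj
            simp only [Fin.le_def]
            have hmx : T.m = T'.m := hmeq
            omega
          obtain ⟨a, b, haJ, hbJ, hcons, h1, h2, h3, h4⟩ := g.bead x y hsb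
          have hvx := hvals x
          have hvy := hvals y
          rcases hcons c' hc' with h | h
          · rw [Fin.le_def] at h h1
            omega
          · rw [Fin.le_def] at h h4
            omega
        by_cases hdiff : ((T.J.image Fin.val) \ (T'.J.image Fin.val)).Nonempty
        · obtain ⟨kv, hkv⟩ := hdiff
          have hkvJ : kv ∈ T.J.image Fin.val := (Finset.mem_sdiff.1 hkv).1
          have hkvJ' : kv ∉ T'.J.image Fin.val := (Finset.mem_sdiff.1 hkv).2
          have hkv0 : kv ≠ 0 := by
            intro h
            exact hkvJ' (Finset.mem_image.2 ⟨0, T'.zero_mem, by simp only [Fin.val_zero]; omega⟩)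
          have hkvlt : kv < T'.m := by
            obtain ⟨j, hj, hjv⟩ := Finset.mem_image.1 hkvJ
            have hjl := j.isLt
            have hne : kv ≠ T'.m := by
              intro h
              exact hkvJ'
                (Finset.mem_image.2 ⟨Fin.last T'.m, T'.last_mem, by simp only [Fin.val_last]; omega⟩)
            omega
          set u' : Fin (T'.m+1) := ⟨kv, by omega⟩ with hu'
          have hu'J : u' ∉ T'.J := fun h => hkvJ' (Finset.mem_image.2 ⟨u', h, rfl⟩)
          set T1 : Necklace := ⟨T'.m, insert u' T'.J, Finset.mem_insert_of_mem T'.zero_mem,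
            Finset.mem_insert_of_mem T'.last_mem⟩ with hT1
          have hT1m : T1.m = T'.m := by rw [hT1]
          have hebead : ∀ x y : Fin (T'.m+1), SameBead T1 x y → SameBead T' x y := by
            intro x y hsb
            obtain ⟨a, b, haJ, hbJ, hcons, h1, h2, h3, h4⟩ := hsb
            apply sameBead_of_between
            intro j hj
            rcases hcons j (Finset.mem_insert_of_mem hj) with h | h
            · exact Or.inl ⟨le_trans h h1, le_trans h h3⟩
            · exact Or.inr ⟨le_trans h2 h, le_trans h4 h⟩
          set ehom : Hom T1 T' := ⟨fun z => z, fun p q h => h, rfl, rfl, hebead⟩ with hehom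
          have htypeI : TypeI ehom := by
            refine ⟨fun p q h => h, ?_⟩
            have hNc : ∀ (S : Necklace), S.N = S.m + 1 - S.J.card := by
              intro S
              rw [N, nonJoints, Finset.card_sdiff_of_subset (Finset.subset_univ _)]
              simp
            rw [hNc T', hNc T1]
            have hins : T1.J.card = T'.J.card + 1 := Finset.card_insert_of_notMem hu'J
            have hsub : T'.J ⊆ Finset.univ.erase u' := fun z hz =>
              Finset.mem_erase.2 ⟨fun h => hu'J (h ▸ hz), Finset.mem_univ _⟩
            have hle := Finset.card_le_card hsub
            rw [Finset.card_erase_of_mem (Finset.mem_univ _)] at hle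
            have h5 : (Finset.univ : Finset (Fin (T'.m+1))).card = T'.m+1 := by simp
            omega
          have hcast : ∀ x : Fin (T.m+1), x.val < T1.m + 1 := by
            intro x; have := x.isLt; omega
          set f1 : Fin (T.m+1) → Fin (T1.m+1) := fun x => ⟨x.val, hcast x⟩ with hf1
          have hg1bead : ∀ x y, SameBead T x y → SameBead T1 (f1 x) (f1 y) := by
            intro x y hsb
            obtain ⟨a, b, haJ, hbJ, hcons, h1, h2, h3, h4⟩ := hsb
            apply sameBead_of_between
            intro j hj
            have hjval : j.val ∈ T.J.image Fin.val := by
              rcases Finset.mem_insert.1 hj with h | h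
              · rw [h]; exact hkvJ
              · exact hJ'sub j h
            obtain ⟨jt, hjt, hjtv⟩ := Finset.mem_image.1 hjval
            have e1 : (f1 x).val = x.val := rfl
            have e2 : (f1 y).val = y.val := rfl
            rcases hcons jt hjt with h | h
            · left
              rw [Fin.le_def] at h h1 h3
              constructor
              · rw [Fin.le_def, e1]; omega
              · rw [Fin.le_def, e2]; omega
            · right
              rw [Fin.le_def] at h h2 h4
              constructor
              · rw [Fin.le_def, e1]; omega
              · rw [Fin.le_def, e2]; omega
          set g1 : Hom T T1 := ⟨f1, fun p q h => by
              rw [Fin.le_def] at h ⊢; exact h, by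
              apply Fin.ext
              show (0 : Fin (T.m+1)).val = (0 : Fin (T1.m+1)).val
              simp, by
              apply Fin.ext
              have e3 : (f1 (Fin.last T.m)).val = T.m := rfl
              rw [e3, Fin.val_last]
              omega, hg1bead⟩ with hg1
          have hfac : g = ehom.comp g1 := Hom.ext' (funext fun x => Fin.ext (hvals x))
          have himgT1 : T1.J.image Fin.val = insert kv (T'.J.image Fin.val) :=
            Finset.image_insert _ _ _
          have hmeas : (T.m + T1.m) * (T.m + T1.m + 2) +
              ((T.J.image Fin.val) \ (T1.J.image Fin.val)).card < μ := by
            have hsum : T.m + T1.m = T.m + T'.m := by omega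
            rw [hsum, himgT1]
            have hss : T.J.image Fin.val \ insert kv (T'.J.image Fin.val) =
                (T.J.image Fin.val \ T'.J.image Fin.val).erase kv := by
              ext z
              simp only [Finset.mem_sdiff, Finset.mem_erase, Finset.mem_insert]
              tauto
            rw [hss]
            have hcard := Finset.card_erase_lt_of_mem hkv
            linarith [hμ]
          rcases ih g1 hmeas with hid | hgen
          · rw [hfac]
            exact Or.inr (isGenComp_comp_identity g1 ehom hid (IsGenComp.of ehom (Or.inl htypeI)))
          · rw [hfac]
            exact Or.inr (IsGenComp.comp g1 ehom hgen (IsGenComp.of ehom (Or.inl htypeI)))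
        · left
          have hsub1 : T.J.image Fin.val ⊆ T'.J.image Fin.val := by
            rw [← Finset.sdiff_eq_empty_iff_subset]
            exact Finset.not_nonempty_iff_eq_empty.1 hdiff
          have hsub2 : T'.J.image Fin.val ⊆ T.J.image Fin.val := by
            intro kv hkv
            obtain ⟨c', hc', hcv⟩ := Finset.mem_image.1 hkv
            exact hcv ▸ hJ'sub c' hc'
          exact ⟨ext' hmeq (Finset.Subset.antisymm hsub1 hsub2), hvals⟩

      · -- case 1: collapse an adjacent collision
        obtain ⟨k, hk1, hcol⟩ := exists_adjacent_collision g hinj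
        obtain ⟨n, hTm⟩ : ∃ n, T.m = n + 1 := ⟨T.m - 1, by omega⟩
        have hkn : k ≤ n := by omega
        have hc1 : ∀ x : Fin (T.m+1), (if x.val ≤ k then x.val else x.val - 1) < n + 1 := by
          intro x; have := x.isLt; split_ifs <;> omega
        set c : Fin (T.m+1) → Fin (n+1) :=
          fun x => ⟨if x.val ≤ k then x.val else x.val - 1, hc1 x⟩ with hcdef
        have hcval : ∀ x, (c x).val = if x.val ≤ k then x.val else x.val - 1 := fun _ => rfl
        have hcmono : Monotone c := by
          intro p q h; rw [Fin.le_def, hcval, hcval]; rw [Fin.le_def] at h; split_ifs <;> omega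
        have hsL1 : ∀ y : Fin (n+1), (if y.val ≤ k then y.val else y.val + 1) < T.m + 1 := by
          intro y; have := y.isLt; split_ifs <;> omega
        set sL : Fin (n+1) → Fin (T.m+1) :=
          fun y => ⟨if y.val ≤ k then y.val else y.val + 1, hsL1 y⟩ with hsLdef
        have hsLval : ∀ y, (sL y).val = if y.val ≤ k then y.val else y.val + 1 := fun _ => rfl
        have hsH1 : ∀ y : Fin (n+1), (if y.val < k then y.val else y.val + 1) < T.m + 1 := by
          intro y; have := y.isLt; split_ifs <;> omega
        set sH : Fin (n+1) → Fin (T.m+1) :=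
          fun y => ⟨if y.val < k then y.val else y.val + 1, hsH1 y⟩ with hsHdef
        have hsHval : ∀ y, (sH y).val = if y.val < k then y.val else y.val + 1 := fun _ => rfl
        have hsLmono : Monotone sL := by
          intro p q h; rw [Fin.le_def, hsLval, hsLval]; rw [Fin.le_def] at h; split_ifs <;> omega
        have hcsL : ∀ y, c (sL y) = y := by
          intro y
          apply Fin.ext
          rw [hcval, hsLval]
          have := y.isLt
          split_ifs <;> omega
        have hgLH : ∀ y, g.f (sL y) = g.f (sH y) := by
          intro y
          by_cases h : y.val = k
          · have h1 : sL y = ⟨k, by omega⟩ := Fin.ext (by rw [hsLval]; dsimp only; split_ifs <;> omega)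
            have h2 : sH y = ⟨k+1, hk1⟩ := Fin.ext (by rw [hsHval]; dsimp only; split_ifs <;> omega)
            rw [h1, h2]; exact hcol
          · congr 1
            exact Fin.ext (by rw [hsLval, hsHval]; split_ifs <;> omega)
        have hczero : c 0 = 0 :=
          Fin.ext (by rw [hcval]; rw [if_pos (by rw [Fin.val_zero]; omega)]; simp)
        have hclast : c (Fin.last T.m) = Fin.last n :=
          Fin.ext (by rw [hcval]; simp only [Fin.val_last]; split_ifs <;> omega)
        set Tc : Necklace := ⟨n, T.J.image c,
          Finset.mem_image.2 ⟨0, T.zero_mem, hczero⟩,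
          Finset.mem_image.2 ⟨Fin.last T.m, T.last_mem, hclast⟩⟩ with hTc
        have hTcm : Tc.m = n := by rw [hTc]
        have hTcJ : ∀ j : Fin (T.m+1), j ∈ T.J → c j ∈ Tc.J := fun j hj =>
          Finset.mem_image_of_mem c hj
        have hcbead : ∀ x y, SameBead T x y → SameBead Tc (c x) (c y) := by
          intro x y hsb
          obtain ⟨a, b, haJ, hbJ, hcons, h1, h2, h3, h4⟩ := hsb
          refine ⟨c a, c b, hTcJ a haJ, hTcJ b hbJ, ?_, hcmono h1, hcmono h2, hcmono h3, hcmono h4⟩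
          intro c' hc'
          obtain ⟨j, hj, hjc⟩ := Finset.mem_image.1 hc'
          rcases hcons j hj with h | h
          · left; rw [← hjc]; exact hcmono h
          · right; rw [← hjc]; exact hcmono h
        set chom : Hom T Tc := ⟨c, hcmono, hczero, hclast, hcbead⟩ with hchom
        have hkm : k < T.m := by omega
        have hccol2 : chom.f (⟨k, hkm⟩ : Fin T.m).castSucc = chom.f (⟨k, hkm⟩ : Fin T.m).succ := by
          show c _ = c _
          apply Fin.ext
          rw [hcval, hcval]
          simp only [Fin.coe_castSucc, Fin.val_succ]
          split_ifs <;> omega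
        have hpairchar : ∀ a b : Fin (T.m+1), chom.f a = chom.f b →
            a = b ∨ ({a, b} : Finset _) =
              {(⟨k, hkm⟩ : Fin T.m).castSucc, (⟨k, hkm⟩ : Fin T.m).succ} := by
          intro a b hab
          by_cases hne : a = b
          · exact Or.inl hne
          · right
            have habv := congrArg Fin.val (hab : c a = c b)
            rw [hcval, hcval] at habv
            have hnev : a.val ≠ b.val := fun h => hne (Fin.ext h)
            have hav := a.isLt
            have hbv := b.isLt
            have hchar : (a.val = k ∧ b.val = k+1) ∨ (a.val = k+1 ∧ b.val = k) := by
              split_ifs at habv <;> omega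
            rcases hchar with ⟨h1, h2⟩ | ⟨h1, h2⟩
            · have ha' : a = (⟨k, hkm⟩ : Fin T.m).castSucc :=
                Fin.ext (by simp only [Fin.coe_castSucc]; exact h1)
              have hb' : b = (⟨k, hkm⟩ : Fin T.m).succ :=
                Fin.ext (by simp only [Fin.val_succ]; omega)
              simp only [ha', hb']
            · have ha' : a = (⟨k, hkm⟩ : Fin T.m).succ :=
                Fin.ext (by simp only [Fin.val_succ]; omega)
              have hb' : b = (⟨k, hkm⟩ : Fin T.m).castSucc :=
                Fin.ext (by simp only [Fin.coe_castSucc]; exact h2)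
              simp only [ha', hb']
              exact Finset.pair_comm _ _
        have hcsurj : Function.Surjective c := fun y => ⟨sL y, hcsL y⟩
        have himgJ : Finset.image chom.f T.J = Tc.J := by
          ext x
          constructor
          · intro hx
            obtain ⟨j, hj, hjx⟩ := Finset.mem_image.1 hx
            exact hjx ▸ hTcJ j hj
          · intro hx
            obtain ⟨j, hj, hjx⟩ := Finset.mem_image.1 hx
            exact Finset.mem_image.2 ⟨j, hj, hjx⟩
        have htype : TypeII chom ∨ TypeIII chom := by
          by_cases hjj : (⟨k, hkm⟩ : Fin T.m).castSucc ∈ T.J ∧ (⟨k, hkm⟩ : Fin T.m).succ ∈ T.J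
          · exact Or.inr ⟨hcsurj, himgJ, ⟨k, hkm⟩, hccol2, hjj.1, hjj.2, hpairchar⟩
          · refine Or.inl ⟨hcsurj, himgJ, ?_, ⟨k, hkm⟩, hccol2, hjj, hpairchar⟩
            intro a ha b hb hab
            rcases hpairchar a b hab with h | h
            · exact h
            · exfalso
              apply hjj
              constructor
              · have hm : (⟨k, hkm⟩ : Fin T.m).castSucc ∈ ({a, b} : Finset _) := by
                  rw [h]; simp
                rcases Finset.mem_insert.1 hm with h' | h'
                · rw [h']; exact ha
                · rw [Finset.mem_singleton.1 h']; exact hb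
              · have hm : (⟨k, hkm⟩ : Fin T.m).succ ∈ ({a, b} : Finset _) := by
                  rw [h]; simp
                rcases Finset.mem_insert.1 hm with h' | h'
                · rw [h']; exact ha
                · rw [Finset.mem_singleton.1 h']; exact hb
        have hg1zero : g.f (sL 0) = 0 := by
          have h1 : sL 0 = 0 := Fin.ext (by rw [hsLval]; rw [if_pos (by rw [Fin.val_zero]; omega)]; simp)
          rw [h1, g.map_zero]
        have hg1last : g.f (sL (Fin.last n)) = Fin.last T'.m := by
          by_cases h : k = n
          · have h1 : sL (Fin.last n) = ⟨k, by omega⟩ :=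
              Fin.ext (by rw [hsLval]; simp only [Fin.val_last]; split_ifs <;> omega)
            have h2 : (⟨k+1, hk1⟩ : Fin (T.m+1)) = Fin.last T.m :=
              Fin.ext (by simp only [Fin.val_last]; omega)
            rw [h1, hcol, h2, g.map_last]
          · have h1 : sL (Fin.last n) = Fin.last T.m :=
              Fin.ext (by rw [hsLval]; simp only [Fin.val_last]; split_ifs <;> omega)
            rw [h1, g.map_last]
        have hg1bead : ∀ x y : Fin (n+1), SameBead Tc x y →
            SameBead T' (g.f (sL x)) (g.f (sL y)) := by
          intro x y hsb
          obtain ⟨a', b', ha', hb', hcons, h1, h2, h3, h4⟩ := hsb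
          have hjlt' := fun (j : Fin (T.m+1)) => j.isLt
          by_cases hside : k ≤ a'.val
          · rw [hgLH x, hgLH y]
            apply g.bead
            apply sameBead_of_between
            intro j hj
            have hcj := hcons (c j) (hTcJ j hj)
            simp only [Fin.le_def, hsHval, hsLval, hcval] at hcj h1 h2 h3 h4 ⊢
            have hjlt := j.isLt
            split_ifs at hcj ⊢ <;> omega
          · apply g.bead
            apply sameBead_of_between
            intro j hj
            have hcj := hcons (c j) (hTcJ j hj)
            simp only [Fin.le_def, hsHval, hsLval, hcval] at hcj h1 h2 h3 h4 ⊢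
            have hjlt := j.isLt
            split_ifs at hcj ⊢ <;> omega
        set g1 : Hom Tc T' := ⟨fun y => g.f (sL y), fun p q h => g.mono (hsLmono h),
          hg1zero, hg1last, hg1bead⟩ with hg1'
        have hkey : ∀ x, g.f (sL (c x)) = g.f x := by
          intro x
          by_cases h : x.val = k + 1
          · have h1 : sL (c x) = ⟨k, by omega⟩ :=
              Fin.ext (by rw [hsLval, hcval]; dsimp only; split_ifs <;> omega)
            have h2 : x = ⟨k+1, hk1⟩ := Fin.ext h
            rw [h1]
            have h3 : g.f x = g.f ⟨k+1, hk1⟩ := by rw [h2]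
            rw [h3]
            exact hcol
          · congr 1
            exact Fin.ext (by rw [hsLval, hcval]; have := x.isLt; split_ifs <;> omega)
        have hfac : g = g1.comp chom := Hom.ext' (funext fun x => (hkey x).symm)
        have hd1 : ((Tc.J.image Fin.val) \ (T'.J.image Fin.val)).card ≤ n + 1 := by
          calc _ ≤ (Tc.J.image Fin.val).card := Finset.card_le_card Finset.sdiff_subset
            _ ≤ Tc.J.card := Finset.card_image_le
            _ ≤ n + 1 := by
              have h2 : Tc.J.card ≤ Tc.m + 1 := by simpa using Finset.card_le_univ Tc.J
              omega
        have hmeas : (Tc.m + T'.m) * (Tc.m + T'.m + 2) +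
            ((Tc.J.image Fin.val) \ (T'.J.image Fin.val)).card < μ := by
          have hrw : Tc.m + T'.m = n + T'.m := by omega
          rw [hrw]
          have hkey2 : (n + T'.m) * (n + T'.m + 2) + (n + 1) <
              (T.m + T'.m) * (T.m + T'.m + 2) := by
            rw [hTm]; nlinarith
          linarith [hd1, hμ]
        rcases ih g1 hmeas with hid | hgen
        · rw [hfac]
          exact Or.inr (isGenComp_identity_comp chom g1 hid (IsGenComp.of chom (Or.inr htype)))
        · rw [hfac]
          exact Or.inr (IsGenComp.comp chom g1 (IsGenComp.of chom (Or.inr htype)) hgen)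

    · -- case 2: insert a missing vertex
      rw [Function.Surjective] at hsurj
      push_neg at hsurj
      obtain ⟨u, hu⟩ := hsurj
      have huJ : u ∉ T'.J := fun h => joint_mem_range g h hu
      have hu0 : u.val ≠ 0 := by
        intro h
        exact hu 0 (by rw [g.map_zero]; exact Fin.ext (by simp [h]))
      have hul : u.val ≠ T'.m := by
        intro h
        exact hu (Fin.last T.m) (by rw [g.map_last]; exact Fin.ext (by simp [h]))
      have hult := u.isLt
      obtain ⟨n, hn⟩ : ∃ n, T'.m = n + 1 := ⟨T'.m - 1, by omega⟩
      have hun : u.val ≤ n := by omega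
      have he1 : ∀ y : Fin (n+1), (if y.val < u.val then y.val else y.val + 1) < T'.m + 1 := by
        intro y; have := y.isLt; split_ifs <;> omega
      set e : Fin (n+1) → Fin (T'.m+1) :=
        fun y => ⟨if y.val < u.val then y.val else y.val + 1, he1 y⟩ with hedef
      have heval : ∀ y : Fin (n+1), (e y).val = if y.val < u.val then y.val else y.val + 1 :=
        fun y => rfl
      have heLE : ∀ p q : Fin (n+1), e p ≤ e q ↔ p ≤ q := by
        intro p q
        rw [Fin.le_def, Fin.le_def, heval, heval]
        split_ifs <;> omega
      have hemono : Monotone e := fun p q h => (heLE p q).2 h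
      have hr1 : ∀ x : Fin (T'.m+1), (if x.val < u.val then x.val else x.val - 1) < n + 1 := by
        intro x; have := x.isLt; split_ifs <;> omega
      set r : Fin (T'.m+1) → Fin (n+1) :=
        fun x => ⟨if x.val < u.val then x.val else x.val - 1, hr1 x⟩ with hrdef
      have hrval : ∀ x, (r x).val = if x.val < u.val then x.val else x.val - 1 := fun x => rfl
      have hrmono : Monotone r := by
        intro p q h
        rw [Fin.le_def, hrval, hrval]
        rw [Fin.le_def] at h
        split_ifs <;> omega
      have hre : ∀ x, x ≠ u → e (r x) = x := by
        intro x hx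
        have hxv : x.val ≠ u.val := fun h => hx (Fin.ext h)
        apply Fin.ext
        rw [heval, hrval]
        have := x.isLt
        split_ifs <;> omega
      have hezero : e 0 = 0 := Fin.ext (by rw [heval]; rw [if_pos (by rw [Fin.val_zero]; omega)]; simp)
      have helast : e (Fin.last n) = Fin.last T'.m :=
        Fin.ext (by rw [heval]; simp only [Fin.val_last]; split_ifs <;> omega)
      set T1 : Necklace := ⟨n, Finset.univ.filter (fun y => e y ∈ T'.J),
        Finset.mem_filter.2 ⟨Finset.mem_univ _, hezero ▸ T'.zero_mem⟩,
        Finset.mem_filter.2 ⟨Finset.mem_univ _, helast ▸ T'.last_mem⟩⟩ with hT1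
      have hm1 : T1.m = n := by rw [hT1]
      have hT1J : ∀ y : Fin (n+1), y ∈ T1.J ↔ e y ∈ T'.J := by
        intro y
        constructor
        · intro h; exact (Finset.mem_filter.1 h).2
        · intro h; exact Finset.mem_filter.2 ⟨Finset.mem_univ _, h⟩
      have hebead : ∀ x y : Fin (n+1), SameBead T1 x y → SameBead T' (e x) (e y) := by
        intro x y hsb
        obtain ⟨a, b, haJ, hbJ, hcons, h1, h2, h3, h4⟩ := hsb
        refine ⟨e a, e b, (hT1J a).1 haJ, (hT1J b).1 hbJ, ?_,
          hemono h1, hemono h2, hemono h3, hemono h4⟩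
        intro c hc
        have hcu : c ≠ u := fun h => huJ (h ▸ hc)
        have hj : e (r c) = c := hre c hcu
        have hm : e (r c) ∈ T'.J := by rw [hj]; exact hc
        have hjJ : r c ∈ T1.J := (hT1J _).2 hm
        rcases hcons (r c) hjJ with h | h
        · exact Or.inl (hj ▸ hemono h)
        · exact Or.inr (hj ▸ hemono h)
      set ehom : Hom T1 T' := ⟨e, hemono, hezero, helast, hebead⟩ with hehom
      have heinj : Function.Injective e := by
        intro p q h
        have h2 := congrArg Fin.val h
        rw [heval, heval] at h2
        apply Fin.ext
        split_ifs at h2 <;> omega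
      have hcardJ : T1.J.card = T'.J.card := by
        have himg : T1.J.image e = T'.J := by
          ext c
          constructor
          · intro hc
            obtain ⟨j, hjm, hje⟩ := Finset.mem_image.1 hc
            exact hje ▸ (hT1J j).1 hjm
          · intro hc
            have hcu : c ≠ u := fun h => huJ (h ▸ hc)
            have hm : e (r c) ∈ T'.J := by rw [hre c hcu]; exact hc
            exact Finset.mem_image.2 ⟨r c, (hT1J _).2 hm, hre c hcu⟩
        rw [← himg, Finset.card_image_of_injective _ heinj]
      have hJle : T'.J.card ≤ n + 1 := by
        have hsub : T'.J ⊆ Finset.univ.erase u := fun c hc =>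
          Finset.mem_erase.2 ⟨fun h => huJ (h ▸ hc), Finset.mem_univ _⟩
        calc T'.J.card ≤ (Finset.univ.erase u).card := Finset.card_le_card hsub
          _ = n + 1 := by
            rw [Finset.card_erase_of_mem (Finset.mem_univ _)]
            simp [hn]
      have hNcard : ∀ (S : Necklace), S.N = S.m + 1 - S.J.card := by
        intro S
        rw [N, nonJoints, Finset.card_sdiff_of_subset (Finset.subset_univ _)]
        simp
      have htypeI : TypeI ehom := by
        refine ⟨heinj, ?_⟩
        rw [hNcard T', hNcard T1]
        omega
      have hg1bead : ∀ x y, SameBead T x y → SameBead T1 (r (g.f x)) (r (g.f y)) := by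
        intro x y hsb
        obtain ⟨a, b, haJ, hbJ, hcons, h1, h2, h3, h4⟩ := g.bead x y hsb
        have hau : a ≠ u := fun h => huJ (h ▸ haJ)
        have hbu : b ≠ u := fun h => huJ (h ▸ hbJ)
        have hma : e (r a) ∈ T'.J := by rw [hre a hau]; exact haJ
        have hmb : e (r b) ∈ T'.J := by rw [hre b hbu]; exact hbJ
        refine ⟨r a, r b, (hT1J _).2 hma, (hT1J _).2 hmb, ?_,
          hrmono h1, hrmono h2, hrmono h3, hrmono h4⟩
        intro j hj
        have hjJ' : e j ∈ T'.J := (hT1J j).1 hj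
        rcases hcons (e j) hjJ' with h | h
        · left
          have h' : e j ≤ e (r a) := by rw [hre a hau]; exact h
          exact (heLE _ _).1 h'
        · right
          have h' : e (r b) ≤ e j := by rw [hre b hbu]; exact h
          exact (heLE _ _).1 h'
      set g1 : Hom T T1 := ⟨fun x => r (g.f x), fun p q h => hrmono (g.mono h), by
          show r (g.f 0) = 0
          rw [g.map_zero]
          apply Fin.ext
          rw [hrval]
          rw [if_pos (by rw [Fin.val_zero]; omega)]; simp, by
          show r (g.f (Fin.last T.m)) = Fin.last n
          rw [g.map_last]
          apply Fin.ext
          rw [hrval]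
          simp only [Fin.val_last]
          split_ifs <;> omega, hg1bead⟩ with hg1
      have hfac : g = ehom.comp g1 := Hom.ext' (funext fun x => (hre (g.f x) (hu x)).symm)
      have hd1 : ((T.J.image Fin.val) \ (T1.J.image Fin.val)).card ≤ T.m + 1 := by
        calc _ ≤ (T.J.image Fin.val).card := Finset.card_le_card Finset.sdiff_subset
          _ ≤ T.J.card := Finset.card_image_le
          _ ≤ T.m + 1 := by simpa using Finset.card_le_univ T.J
      have hmeas : (T.m + T1.m) * (T.m + T1.m + 2) +
          ((T.J.image Fin.val) \ (T1.J.image Fin.val)).card < μ := by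
        have hrw : T.m + T1.m = T.m + n := by omega
        rw [hrw]
        have hkey : (T.m + n) * (T.m + n + 2) + (T.m + 1) < (T.m + T'.m) * (T.m + T'.m + 2) := by
          rw [hn]; nlinarith
        linarith [hd1, hμ]
      rcases ih g1 hmeas with hid | hgen
      · rw [hfac]
        exact Or.inr (isGenComp_comp_identity g1 ehom hid (IsGenComp.of ehom (Or.inl htypeI)))
      · rw [hfac]
        exact Or.inr (IsGenComp.comp g1 ehom hgen (IsGenComp.of ehom (Or.inl htypeI)))


end Necklace

open Necklace in
/-- Every non-identity morphism in the category of necklaces is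
a composition of morphisms of types (i), (ii) and (iii). -/
theorem necklace_hom_factorization {T T' : Necklace} (g : Necklace.Hom T T')
    (hg : ¬ Necklace.IsIdentity g) : Necklace.IsGenComp g := by
  rcases Necklace.main ((T.m + T'.m) * (T.m + T'.m + 2) +
      ((T.J.image Fin.val) \ (T'.J.image Fin.val)).card + 1) g (Nat.lt_succ_self _) with h | h
  · exact absurd h hg
  · exact h
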